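/- arXiv:2202.04932 — 3 statements merged into one kernel-verified Lean document; each statement's English description precedes it below -/
import Mathlib

section
/- Let Q be a homogeneous quadratic polynomial in n variables over the complex numbers, and suppose Q = \sum_{i=1}^{r} a_{2i-1} a_{2i} and Q = \sum_{i=1}^{r} b_{2i-1} b_{2i} are two representations of Q as sums of r products of linear forms, where r is minimal (no representation with fewer than r products exists). Then span{a_1,...,a_{2r}} = span{b_1,...,b_{2r}}. -/
open MvPolynomial

noncomputable section

/-- A linear form: a homogeneous polynomial of degree 1. -/
def IsLinForm {σ : Type*} (p : MvPolynomial σ ℂ) : Prop := p.IsHomogeneous 1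

/-- `Q` admits a representation as a sum of `r` products of pairs of linear forms. -/
def HasRep {σ : Type*} (Q : MvPolynomial σ ℂ) (r : ℕ) : Prop :=
  ∃ a b : Fin r → MvPolynomial σ ℂ,
    (∀ i, IsLinForm (a i)) ∧ (∀ i, IsLinForm (b i)) ∧ Q = ∑ i, a i * b i

/-- `rank_s Q`: the minimal `r` such that `Q = ∑_{i=1}^r a_{2i-1} a_{2i}` for linear forms. -/
noncomputable def rankS {σ : Type*} (Q : MvPolynomial σ ℂ) : ℕ := sInf {r | HasRep Q r}

/-- The minimal space `MS Q`: the span of the linear forms appearing in a minimal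
representation of `Q` (taken as the supremum over all minimal representations,
which coincides with any single one by well-definedness). -/
noncomputable def MS {σ : Type*} (Q : MvPolynomial σ ℂ) : Submodule ℂ (MvPolynomial σ ℂ) :=
  ⨆ p : {ab : (Fin (rankS Q) → MvPolynomial σ ℂ) × (Fin (rankS Q) → MvPolynomial σ ℂ) //
      (∀ i, IsLinForm (ab.1 i)) ∧ (∀ i, IsLinForm (ab.2 i)) ∧ Q = ∑ i, ab.1 i * ab.2 i},
    Submodule.span ℂ (Set.range p.1.1 ∪ Set.range p.1.2)

/-- `C[V]₂`: the space of homogeneous quadratics depending only on linear forms in `V`. -/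
def quadOn {σ : Type*} (V : Submodule ℂ (MvPolynomial σ ℂ)) :
    Submodule ℂ (MvPolynomial σ ℂ) :=
  Submodule.span ℂ {q | ∃ v ∈ V, ∃ w ∈ V, q = v * w}

section Helpers

variable {n : ℕ}

local notation "P" => fun n => MvPolynomial (Fin n) ℂ



lemma degree_univ_sum (d : Fin n →₀ ℕ) : d.degree = ∑ i, d i := by
  rw [Finsupp.degree]
  exact Finset.sum_subset (Finset.subset_univ _) (by simp [Finsupp.notMem_support_iff])

lemma X_mul_mono (i : Fin n) (s : Fin n →₀ ℕ) (c : ℂ) :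
    X i * monomial s c = monomial (Finsupp.single i 1 + s) c := by
  rw [X, monomial_mul, one_mul]

lemma X_mul_pderiv_mono (i : Fin n) (s : Fin n →₀ ℕ) (c : ℂ) :
    X i * pderiv i (monomial s c) = monomial s (c * s i) := by
  rw [pderiv_monomial, X_mul_mono]
  rcases Nat.eq_zero_or_pos (s i) with h | h
  · rw [h]; simp
  · have hs : Finsupp.single i 1 + (s - Finsupp.single i 1) = s := by
      ext j
      rw [Finsupp.add_apply, Finsupp.tsub_apply]
      rcases eq_or_ne j i with rfl | hj
      · simp only [Finsupp.single_eq_same]; omega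
      · simp only [Finsupp.single_eq_of_ne' (Ne.symm hj)]; omega
    rw [hs]

/-- Euler's identity. -/
lemma euler {d : ℕ} {p : MvPolynomial (Fin n) ℂ} (hp : p.IsHomogeneous d) :
    ∑ i, X i * pderiv i p = (d : ℂ) • p := by
  conv_lhs => rw [p.as_sum]
  conv_rhs => rw [p.as_sum]
  rw [Finset.smul_sum]
  simp only [map_sum, Finset.mul_sum]
  rw [Finset.sum_comm]
  refine Finset.sum_congr rfl fun v hv => ?_
  have hdeg : v.degree = d := by
    have := hp (mem_support_iff.mp hv)
    rwa [Pi.one_def, ← Finsupp.degree_eq_weight_one] at this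
  calc ∑ i, X i * pderiv i (monomial v (coeff v p))
      = ∑ i, monomial v (coeff v p * v i) := by
        exact Finset.sum_congr rfl fun i _ => X_mul_pderiv_mono i v _
    _ = monomial v (coeff v p * ∑ i, (v i : ℂ)) := by
        rw [Finset.mul_sum, map_sum]
    _ = (d : ℂ) • monomial v (coeff v p) := by
        rw [smul_monomial, smul_eq_mul, ← hdeg, degree_univ_sum]
        congr 1
        push_cast
        ring



lemma degree_univ_sum' (d : Fin n →₀ ℕ) : d.degree = ∑ i, d i := by
  rw [Finsupp.degree]
  exact Finset.sum_subset (Finset.subset_univ _) (by simp [Finsupp.notMem_support_iff])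

lemma single_add_sub {v : Fin n →₀ ℕ} {i : Fin n} (h : 0 < v i) :
    Finsupp.single i 1 + (v - Finsupp.single i 1) = v := by
  ext j
  rw [Finsupp.add_apply, Finsupp.tsub_apply]
  rcases eq_or_ne j i with rfl | hj
  · simp only [Finsupp.single_eq_same]; omega
  · simp only [Finsupp.single_eq_of_ne' (Ne.symm hj)]; omega

lemma degree_add' (a b : Fin n →₀ ℕ) : (a + b).degree = a.degree + b.degree := by
  simp only [degree_univ_sum', Finsupp.add_apply, Finset.sum_add_distrib]

lemma degree_sub_single {v : Fin n →₀ ℕ} {i : Fin n} (h : 0 < v i) :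
    (v - Finsupp.single i 1).degree = v.degree - 1 := by
  conv_rhs => rw [← single_add_sub h]
  rw [degree_add']
  have : (Finsupp.single i 1 : Fin n →₀ ℕ).degree = 1 := by
    rw [degree_univ_sum']
    simp [Finsupp.single_apply]
  omega

lemma pderiv_homog {p : MvPolynomial (Fin n) ℂ} {d : ℕ} (hp : p.IsHomogeneous d) (i : Fin n) :
    (pderiv i p).IsHomogeneous (d - 1) := by
  conv in p => rw [p.as_sum]
  rw [map_sum]
  refine IsHomogeneous.sum _ _ _ fun v hv => ?_
  have hdeg : v.degree = d := by
    have := hp (mem_support_iff.mp hv)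
    rwa [Pi.one_def, ← Finsupp.degree_eq_weight_one] at this
  rw [pderiv_monomial]
  rcases Nat.eq_zero_or_pos (v i) with h | h
  · rw [h]
    push_cast
    rw [mul_zero]
    rw [(monomial (v - Finsupp.single i 1)).map_zero]
    exact isHomogeneous_zero _ _ _
  · exact isHomogeneous_monomial _ (by rw [degree_sub_single h, hdeg])

lemma pderiv_commX (i j : Fin n) (p : MvPolynomial (Fin n) ℂ) :
    pderiv i (pderiv j p) = pderiv j (pderiv i p) := by
  induction p using MvPolynomial.induction_on with
  | C a => simp [pderiv_C]
  | add p q hp hq => simp [map_add, hp, hq]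
  | mul_X p s hp =>
    have h2 : ∀ a b : Fin n, pderiv a (pderiv b (X s : MvPolynomial (Fin n) ℂ)) = 0 := by
      intro a b
      rcases eq_or_ne s b with rfl | hsb
      · rw [pderiv_X_self, pderiv_one]
      · rw [pderiv_X_of_ne hsb, map_zero]
    simp only [pderiv_mul, map_add, pderiv_mul, hp, h2, mul_zero, add_zero]
    ring



lemma degree_single' (i : Fin n) : (Finsupp.single i 1 : Fin n →₀ ℕ).degree = 1 := by
  rw [degree_univ_sum']
  simp [Finsupp.single_apply]

lemma degree_one_single {v : Fin n →₀ ℕ} (h : v.degree = 1) :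
    ∃ i, v = Finsupp.single i 1 := by
  have hne : v ≠ 0 := by rintro rfl; simp [map_zero] at h
  obtain ⟨i, hi⟩ := Finsupp.ne_iff.mp hne
  rw [Finsupp.coe_zero, Pi.zero_apply] at hi
  have hpos : 0 < v i := Nat.pos_of_ne_zero hi
  refine ⟨i, ?_⟩
  have h0 : (v - Finsupp.single i 1).degree = 0 := by
    have := degree_add' (Finsupp.single i 1) (v - Finsupp.single i 1)
    rw [single_add_sub hpos, h, degree_single'] at this
    omega
  rw [Finsupp.degree_eq_zero_iff] at h0
  conv_lhs => rw [← single_add_sub hpos, h0, add_zero]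

lemma homog_zero_eq_C {p : MvPolynomial (Fin n) ℂ} (hp : p.IsHomogeneous 0) :
    p = C (constantCoeff p) := by
  have hsup : p.support ⊆ {0} := by
    intro v hv
    have : v.degree = 0 := by
      have := hp (mem_support_iff.mp hv)
      rwa [Pi.one_def, ← Finsupp.degree_eq_weight_one] at this
    rw [Finsupp.degree_eq_zero_iff] at this
    simp [this]
  conv_lhs => rw [p.as_sum]
  rw [Finset.sum_subset hsup (fun v _ hv => by rw [notMem_support_iff.mp hv, map_zero]),
    Finset.sum_singleton, constantCoeff_eq]
  rfl

lemma linform_decomp {l : MvPolynomial (Fin n) ℂ} (hl : l.IsHomogeneous 1) :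
    l = ∑ j, coeff (Finsupp.single j 1) l • X j := by
  have hrange : l.support ⊆ Finset.univ.image (fun j : Fin n => Finsupp.single j 1) := by
    intro v hv
    have hdeg : v.degree = 1 := by
      have := hl (mem_support_iff.mp hv)
      rwa [Pi.one_def, ← Finsupp.degree_eq_weight_one] at this
    obtain ⟨i, rfl⟩ := degree_one_single hdeg
    exact Finset.mem_image.mpr ⟨i, Finset.mem_univ i, rfl⟩
  conv_lhs => rw [l.as_sum]
  rw [Finset.sum_subset hrange (fun v _ hv => by rw [notMem_support_iff.mp hv, map_zero]),
    Finset.sum_image (fun a _ b _ h => Finsupp.single_left_injective one_ne_zero h)]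
  refine Finset.sum_congr rfl fun j _ => ?_
  rw [smul_eq_C_mul, X, C_mul_monomial, mul_one]

lemma pderiv_linform {l : MvPolynomial (Fin n) ℂ} (hl : l.IsHomogeneous 1) (i : Fin n) :
    pderiv i l = C (coeff (Finsupp.single i 1) l) := by
  conv_lhs => rw [linform_decomp hl]
  rw [map_sum]
  rw [Finset.sum_eq_single i (fun j _ hj => by
      rw [Derivation.map_smul, pderiv_X_of_ne hj, smul_zero]) (by simp)]
  rw [Derivation.map_smul, pderiv_X_self, smul_eq_C_mul, mul_one]



def WQ (Q : MvPolynomial (Fin n) ℂ) : Submodule ℂ (MvPolynomial (Fin n) ℂ) :=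
  Submodule.span ℂ (Set.range fun j : Fin n => pderiv j Q)

lemma pderiv_mem_WQ (Q : MvPolynomial (Fin n) ℂ) (j : Fin n) : pderiv j Q ∈ WQ Q :=
  Submodule.subset_span ⟨j, rfl⟩

instance WQ_findim (Q : MvPolynomial (Fin n) ℂ) : FiniteDimensional ℂ (WQ Q) :=
  FiniteDimensional.span_of_finite ℂ (Set.finite_range _)




variable {r : ℕ} {Q : MvPolynomial (Fin n) ℂ} {a b : Fin r → MvPolynomial (Fin n) ℂ}

lemma pderiv_rep (ha : ∀ i, (a i).IsHomogeneous 1) (hb : ∀ i, (b i).IsHomogeneous 1)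
    (hrep : Q = ∑ i, a i * b i) (j : Fin n) :
    pderiv j Q = ∑ i, (coeff (Finsupp.single j 1) (a i) • b i
      + coeff (Finsupp.single j 1) (b i) • a i) := by
  rw [hrep, map_sum]
  refine Finset.sum_congr rfl fun i _ => ?_
  rw [pderiv_mul, pderiv_linform (ha i), pderiv_linform (hb i), C_mul', mul_comm, C_mul']

lemma WQ_le_span (ha : ∀ i, (a i).IsHomogeneous 1) (hb : ∀ i, (b i).IsHomogeneous 1)
    (hrep : Q = ∑ i, a i * b i) :
    WQ Q ≤ Submodule.span ℂ (Set.range a ∪ Set.range b) := by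
  rw [WQ, Submodule.span_le]
  rintro - ⟨j, rfl⟩
  show pderiv j Q ∈ _
  rw [pderiv_rep ha hb hrep j]
  refine Submodule.sum_mem _ fun i _ => Submodule.add_mem _ ?_ ?_
  · exact Submodule.smul_mem _ _ (Submodule.subset_span (Or.inr ⟨i, rfl⟩))
  · exact Submodule.smul_mem _ _ (Submodule.subset_span (Or.inl ⟨i, rfl⟩))

lemma f_spand (f : MvPolynomial (Fin n) ℂ →ₗ[ℂ] ℂ) {l : MvPolynomial (Fin n) ℂ}
    (hl : l.IsHomogeneous 1) :
    ∑ j, f (X j) * coeff (Finsupp.single j 1) l = f l := by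
  conv_rhs => rw [linform_decomp hl]
  rw [map_sum]
  exact Finset.sum_congr rfl fun j _ => by rw [map_smul, smul_eq_mul, mul_comm]

lemma key_identity (ha : ∀ i, (a i).IsHomogeneous 1) (hb : ∀ i, (b i).IsHomogeneous 1)
    (hrep : Q = ∑ i, a i * b i) (f : MvPolynomial (Fin n) ℂ →ₗ[ℂ] ℂ) :
    ∑ j, f (X j) • pderiv j Q = ∑ i, (f (a i) • b i + f (b i) • a i) := by
  calc ∑ j, f (X j) • pderiv j Q
      = ∑ j, ∑ i, ((f (X j) * coeff (Finsupp.single j 1) (a i)) • b i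
        + (f (X j) * coeff (Finsupp.single j 1) (b i)) • a i) := by
        refine Finset.sum_congr rfl fun j _ => ?_
        rw [pderiv_rep ha hb hrep j, Finset.smul_sum]
        exact Finset.sum_congr rfl fun i _ => by rw [smul_add, smul_smul, smul_smul]
    _ = ∑ i, (f (a i) • b i + f (b i) • a i) := by
        rw [Finset.sum_comm]
        refine Finset.sum_congr rfl fun i _ => ?_
        rw [Finset.sum_add_distrib, ← Finset.sum_smul, ← Finset.sum_smul,
          f_spand f (ha i), f_spand f (hb i)]

lemma span_le_WQ (ha : ∀ i, (a i).IsHomogeneous 1) (hb : ∀ i, (b i).IsHomogeneous 1)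
    (hrep : Q = ∑ i, a i * b i) (hli : LinearIndependent ℂ (Sum.elim a b)) :
    Submodule.span ℂ (Set.range a ∪ Set.range b) ≤ WQ Q := by
  rw [← Set.Sum.elim_range, Submodule.span_le]
  rintro - ⟨t, rfl⟩
  set c := Sum.elim a b with hc
  have hset := (linearIndepOn_id_range_iff hli.injective).mpr hli
  let B := Module.Basis.extend hset
  have hmem : c t.swap ∈ hset.extend (Set.subset_univ _) :=
    Module.Basis.subset_extend hset ⟨t.swap, rfl⟩
  set f := B.coord ⟨c t.swap, hmem⟩ with hf
  have hfc : ∀ s : Fin r ⊕ Fin r, f (c s) = if s = t.swap then 1 else 0 := by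
    intro s
    have hmem' : c s ∈ hset.extend (Set.subset_univ _) :=
      Module.Basis.subset_extend hset ⟨s, rfl⟩
    have hcs : c s = B ⟨c s, hmem'⟩ := (Module.Basis.extend_apply_self hset ⟨c s, hmem'⟩).symm
    rw [hf, Module.Basis.coord_apply, hcs, B.repr_self]
    by_cases hst : s = t.swap
    · subst hst
      rw [if_pos rfl, Finsupp.single_eq_same]
    · rw [if_neg hst]
      have hne : c s ≠ c t.swap := fun h => hst (hli.injective h)
      rw [Finsupp.single_eq_of_ne' (by simp [Subtype.ext_iff, hne])]
  have hid := key_identity ha hb hrep f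
  have hmemW : ∑ j, f (X j) • pderiv j Q ∈ WQ Q :=
    Submodule.sum_mem _ fun j _ => Submodule.smul_mem _ _ (pderiv_mem_WQ Q j)
  rw [hid] at hmemW
  have hsum : ∑ i, (f (a i) • b i + f (b i) • a i) = c t := by
    rcases t with s | s
    · rw [Finset.sum_eq_single s]
      · have h1 : f (a s) = 0 := by simpa [hc] using hfc (Sum.inl s)
        have h2 : f (b s) = 1 := by simpa [hc] using hfc (Sum.inr s)
        simp [h1, h2, hc]
      · intro i _ his
        have h1 : f (a i) = 0 := by simpa [hc] using hfc (Sum.inl i)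
        have h2 : f (b i) = 0 := by simpa [his, hc] using hfc (Sum.inr i)
        simp [h1, h2]
      · simp
    · rw [Finset.sum_eq_single s]
      · have h1 : f (a s) = 1 := by simpa [hc] using hfc (Sum.inl s)
        have h2 : f (b s) = 0 := by simpa [hc] using hfc (Sum.inr s)
        simp [h1, h2, hc]
      · intro i _ his
        have h1 : f (a i) = 0 := by simpa [his, hc] using hfc (Sum.inl i)
        have h2 : f (b i) = 0 := by simpa [hc] using hfc (Sum.inr i)
        simp [h1, h2]
      · simp
  rwa [hsum] at hmemW




/-- Directional derivative. -/
def Dv (u : Fin n → ℂ) : P n →ₗ[ℂ] P n :=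
  ∑ j, u j • (pderiv j).toLinearMap

lemma Dv_apply (u : Fin n → ℂ) (p : P n) : Dv u p = ∑ j, u j • pderiv j p := by
  simp [Dv, LinearMap.sum_apply, LinearMap.smul_apply]

lemma Dv_mem_WQ (u : Fin n → ℂ) (Q : P n) : Dv u Q ∈ WQ Q := by
  rw [Dv_apply]
  exact Submodule.sum_mem _ fun j _ => Submodule.smul_mem _ _ (pderiv_mem_WQ Q j)

lemma smul_homog {p : P n} {d : ℕ} (hp : p.IsHomogeneous d) (c : ℂ) :
    (c • p).IsHomogeneous d := by
  rw [← C_mul']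
  exact hp.C_mul c

lemma Dv_homog {p : P n} {d : ℕ} (hp : p.IsHomogeneous d) (u : Fin n → ℂ) :
    (Dv u p).IsHomogeneous (d - 1) := by
  rw [Dv_apply]
  exact IsHomogeneous.sum _ _ _ fun j _ => smul_homog (pderiv_homog hp j) _

lemma Dv_pderiv (u : Fin n → ℂ) (j : Fin n) (p : P n) :
    Dv u (pderiv j p) = pderiv j (Dv u p) := by
  rw [Dv_apply, Dv_apply, map_sum]
  exact Finset.sum_congr rfl fun j' _ => by
    rw [Derivation.map_smul, pderiv_commX]

lemma Dv_single (j : Fin n) (c : ℂ) (p : P n) :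
    Dv (Pi.single j c) p = c • pderiv j p := by
  rw [Dv_apply]
  rw [Finset.sum_eq_single j (fun t _ ht => by rw [Pi.single_eq_of_ne ht, zero_smul]) (by simp)]
  rw [Pi.single_eq_same]

lemma Dv_add_u (u v : Fin n → ℂ) (p : P n) :
    Dv (u + v) p = Dv u p + Dv v p := by
  simp [Dv_apply, add_smul, Finset.sum_add_distrib]

lemma exists_dir {Q : P n} (hQ2 : Q.IsHomogeneous 2) (j0 j0' : Fin n)
    (hne : pderiv j0 (pderiv j0' Q) ≠ 0) :
    ∃ u : Fin n → ℂ, constantCoeff (Dv u (Dv u Q)) ≠ 0 := by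
  set B := fun j j' : Fin n => constantCoeff (pderiv j (pderiv j' Q)) with hBdef
  have hhom : ∀ j j' : Fin n, (pderiv j (pderiv j' Q)).IsHomogeneous 0 := fun j j' =>
    pderiv_homog (pderiv_homog hQ2 j') j
  have hCB : ∀ j j' : Fin n, pderiv j (pderiv j' Q) = C (B j j') := fun j j' =>
    homog_zero_eq_C (hhom j j')
  have hB : B j0 j0' ≠ 0 := fun h => hne (by rw [hCB j0 j0', h, map_zero])
  have hsymm : ∀ j j' : Fin n, B j j' = B j' j := fun j j' => by
    rw [hBdef]
    simp only []
    rw [pderiv_commX]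
  by_cases h1 : B j0 j0 ≠ 0
  · refine ⟨Pi.single j0 1, ?_⟩
    simp only [Dv_single, one_smul, Derivation.map_smul]
    exact h1
  · by_cases h2 : B j0' j0' ≠ 0
    · refine ⟨Pi.single j0' 1, ?_⟩
      simp only [Dv_single, one_smul, Derivation.map_smul]
      exact h2
    · push_neg at h1 h2
      refine ⟨Pi.single j0 1 + Pi.single j0' 1, ?_⟩
      simp only [Dv_add_u, map_add, Dv_single, one_smul, Derivation.map_smul]
      have e1 : constantCoeff (pderiv j0 (pderiv j0 Q)) = 0 := h1
      have e2 : constantCoeff (pderiv j0' (pderiv j0' Q)) = 0 := h2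
      have e3 : constantCoeff (pderiv j0' (pderiv j0 Q))
          = constantCoeff (pderiv j0 (pderiv j0' Q)) := by rw [pderiv_commX]
      rw [e1, e2, e3, zero_add, add_zero]
      exact fun h => hB (add_self_eq_zero.mp h)

lemma Q_eq_zero_of_pderiv_zero {Q : P n} (hQ2 : Q.IsHomogeneous 2)
    (h : ∀ j, pderiv j Q = 0) : Q = 0 := by
  have := euler hQ2
  simp only [h, mul_zero, Finset.sum_const_zero] at this
  have h2 : ((2 : ℕ) : ℂ) ≠ 0 := by norm_num
  rw [eq_comm, smul_eq_zero] at this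
  exact this.resolve_left h2

lemma sum_squares : ∀ k : ℕ, ∀ Q : P n, Q.IsHomogeneous 2 →
    Module.finrank ℂ (WQ Q) ≤ k →
    ∃ s : Fin k → P n, (∀ i, (s i).IsHomogeneous 1) ∧ Q = ∑ i, (s i) ^ 2 := by
  intro k
  induction k with
  | zero =>
    intro Q hQ2 hrk
    have hW : WQ Q = ⊥ := Submodule.finrank_eq_zero.mp (Nat.le_zero.mp hrk)
    have hpd : ∀ j, pderiv j Q = 0 := fun j => by
      have := pderiv_mem_WQ Q j
      rw [hW, Submodule.mem_bot] at this
      exact this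
    exact ⟨fun i => 0, fun i => isHomogeneous_zero _ _ _, by
      rw [Q_eq_zero_of_pderiv_zero hQ2 hpd]; simp⟩
  | succ k ih =>
    intro Q hQ2 hrk
    by_cases hz : ∀ j j' : Fin n, pderiv j (pderiv j' Q) = 0
    · have hpd : ∀ j', pderiv j' Q = 0 := by
        intro j'
        have h1 : (pderiv j' Q).IsHomogeneous 1 := pderiv_homog hQ2 j'
        have := euler h1
        simp only [hz, mul_zero, Finset.sum_const_zero] at this
        rw [eq_comm, smul_eq_zero] at this
        exact this.resolve_left (by norm_num)
      exact ⟨fun i => 0, fun i => isHomogeneous_zero _ _ _, by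
        rw [Q_eq_zero_of_pderiv_zero hQ2 hpd]; simp⟩
    · push_neg at hz
      obtain ⟨j0, j0', hne⟩ := hz
      obtain ⟨u, hc⟩ := exists_dir hQ2 j0 j0' hne
      set c := constantCoeff (Dv u (Dv u Q)) with hcdef
      set a := Dv u Q with hadef
      have ha1 : a.IsHomogeneous 1 := Dv_homog hQ2 u
      have haW : a ∈ WQ Q := Dv_mem_WQ u Q
      have hDa : Dv u a = C c := homog_zero_eq_C (Dv_homog ha1 u)
      set Q' := Q - (2 * c)⁻¹ • a ^ 2 with hQ'def
      have hQ'2 : Q'.IsHomogeneous 2 := by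
        refine hQ2.sub (smul_homog ?_ _)
        rw [sq]
        exact ha1.mul ha1
      -- partial derivatives of Q'
      have hpda : ∀ j, pderiv j a = C (constantCoeff (pderiv j a)) := fun j =>
        homog_zero_eq_C (pderiv_homog ha1 j)
      have hpd' : ∀ j, pderiv j Q' =
          pderiv j Q - ((2 * c)⁻¹ * (2 * constantCoeff (pderiv j a))) • a := by
        intro j
        rw [hQ'def, map_sub, Derivation.map_smul, sq, pderiv_mul]
        rw [hpda j]
        rw [C_mul', mul_comm a, C_mul', ← two_smul ℂ, smul_smul, smul_smul, mul_assoc,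
          constantCoeff_C]
      have hW'le : WQ Q' ≤ WQ Q := by
        rw [WQ, Submodule.span_le]
        rintro - ⟨j, rfl⟩
        show pderiv j Q' ∈ _
        rw [hpd' j]
        exact Submodule.sub_mem _ (pderiv_mem_WQ Q j) (Submodule.smul_mem _ _ haW)
      -- a is not in WQ Q'
      set φ : P n →ₗ[ℂ] ℂ := (lcoeff ℂ 0).comp (Dv u) with hφdef
      have hφa : φ a = c := by
        rw [hφdef, LinearMap.comp_apply, lcoeff_apply, hDa]
        rw [← constantCoeff_eq, constantCoeff_C]
      have hφpd : ∀ j, φ (pderiv j Q') = 0 := by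
        intro j
        rw [hpd' j, map_sub, map_smul, hφdef, LinearMap.comp_apply, lcoeff_apply,
          Dv_pderiv, ← hadef, ← constantCoeff_eq]
        have : constantCoeff (pderiv j a) = constantCoeff (pderiv j a) := rfl
        rw [LinearMap.comp_apply, lcoeff_apply, ← constantCoeff_eq, hDa, constantCoeff_C]
        field_simp
        simp [hc]
      have hanotin : a ∉ WQ Q' := by
        intro hmem
        have hker : WQ Q' ≤ LinearMap.ker φ := by
          rw [WQ, Submodule.span_le]
          rintro - ⟨j, rfl⟩
          exact LinearMap.mem_ker.mpr (hφpd j)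
        have := hker hmem
        rw [LinearMap.mem_ker, hφa] at this
        exact hc this
      have hlt : WQ Q' < WQ Q := lt_of_le_of_ne hW'le (fun h => hanotin (h ▸ haW))
      have hrk' : Module.finrank ℂ (WQ Q') ≤ k := by
        have := Submodule.finrank_lt_finrank_of_lt hlt
        omega
      obtain ⟨s', hs'1, hs'2⟩ := ih Q' hQ'2 hrk'
      obtain ⟨z, hz2⟩ := IsAlgClosed.exists_pow_nat_eq ((2 * c)⁻¹) (n := 2) (by norm_num)
      refine ⟨Fin.snoc s' (z • a), fun i => ?_, ?_⟩
      · refine Fin.lastCases ?_ (fun i => ?_) i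
        · rw [Fin.snoc_last]
          exact smul_homog ha1 z
        · rw [Fin.snoc_castSucc]
          exact hs'1 i
      · rw [Fin.sum_univ_castSucc]
        simp only [Fin.snoc_castSucc, Fin.snoc_last]
        rw [← hs'2, smul_pow, hz2, hQ'def]
        ring



lemma sum_range_two_mul (m : ℕ) (g : ℕ → P n) :
    ∑ j ∈ Finset.range (2 * m), g j = ∑ i ∈ Finset.range m, (g (2 * i) + g (2 * i + 1)) := by
  induction m with
  | zero => simp
  | succ m ih =>
    have h2 : 2 * (m + 1) = 2 * m + 1 + 1 := by ring
    rw [h2, Finset.sum_range_succ, Finset.sum_range_succ, ih, Finset.sum_range_succ]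
    abel

lemma hasrep_of_squares {Q : P n} (m : ℕ) (s : Fin (2 * m) → P n)
    (hs1 : ∀ i, (s i).IsHomogeneous 1) (hsq : Q = ∑ i, s i ^ 2) : HasRep Q m := by
  classical
  set g : ℕ → P n := fun j => if h : j < 2 * m then s ⟨j, h⟩ else 0 with hg
  have hidx1 : ∀ i : Fin m, 2 * (i : ℕ) < 2 * m := fun i => by omega
  have hidx2 : ∀ i : Fin m, 2 * (i : ℕ) + 1 < 2 * m := fun i => by omega
  have hgval : ∀ (j) (h : j < 2 * m), g j = s ⟨j, h⟩ := fun j h => by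
    simp only [hg]
    rw [dif_pos h]
  have hghom : ∀ (j) (h : j < 2 * m), (g j).IsHomogeneous 1 := fun j h => by
    rw [hgval j h]; exact hs1 _
  refine ⟨fun i => g (2 * i) + C Complex.I * g (2 * i + 1),
          fun i => g (2 * i) - C Complex.I * g (2 * i + 1), fun i => ?_, fun i => ?_, ?_⟩
  · exact (hghom _ (hidx1 i)).add ((hghom _ (hidx2 i)).C_mul _)
  · exact (hghom _ (hidx1 i)).sub ((hghom _ (hidx2 i)).C_mul _)
  · have hImul : (C Complex.I : P n) * C Complex.I = -1 := by
      rw [← map_mul, Complex.I_mul_I, map_neg, map_one]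
    have key : ∀ i : Fin m,
        (g (2*(i:ℕ)) + C Complex.I * g (2*(i:ℕ)+1)) * (g (2*(i:ℕ)) - C Complex.I * g (2*(i:ℕ)+1))
          = g (2*(i:ℕ))^2 + g (2*(i:ℕ)+1)^2 := by
      intro i
      have : (g (2*(i:ℕ)) + C Complex.I * g (2*(i:ℕ)+1)) *
          (g (2*(i:ℕ)) - C Complex.I * g (2*(i:ℕ)+1))
          = g (2*(i:ℕ))^2 - (C Complex.I * C Complex.I) * g (2*(i:ℕ)+1)^2 := by ring
      rw [this, hImul]
      ring
    rw [hsq]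
    have h1 : ∑ i : Fin (2*m), s i ^ 2 = ∑ j ∈ Finset.range (2*m), (g j)^2 := by
      rw [← Fin.sum_univ_eq_sum_range]
      exact Finset.sum_congr rfl fun i _ => by rw [hgval _ i.is_lt]
    rw [h1, sum_range_two_mul, ← Fin.sum_univ_eq_sum_range
      (fun j => (g (2*j))^2 + (g (2*j+1))^2) m]
    exact Finset.sum_congr rfl fun i _ => (key i).symm

lemma minimal_span {r : ℕ} {Q : P n} (hQ : Q.IsHomogeneous 2)
    (a b : Fin r → P n)
    (ha : ∀ i, IsLinForm (a i)) (hb : ∀ i, IsLinForm (b i))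
    (hrep : Q = ∑ i, a i * b i)
    (hmin : ∀ r' < r, ¬ HasRep Q r') :
    Submodule.span ℂ (Set.range a ∪ Set.range b) = WQ Q := by
  classical
  set k := Module.finrank ℂ (WQ Q) with hk
  set m := (k + 1) / 2 with hm
  -- Q has a representation of length m
  have hrep_m : HasRep Q m := by
    obtain ⟨s, hs1, hs2⟩ := sum_squares (2 * m) Q hQ (by omega)
    exact hasrep_of_squares m s hs1 hs2
  have hrm : r ≤ m := by
    by_contra h
    exact hmin m (by omega) hrep_m
  have hWle : WQ Q ≤ Submodule.span ℂ (Set.range a ∪ Set.range b) := WQ_le_span ha hb hrep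
  haveI : FiniteDimensional ℂ (Submodule.span ℂ (Set.range a ∪ Set.range b)) :=
    FiniteDimensional.span_of_finite ℂ ((Set.finite_range a).union (Set.finite_range b))
  set d := Module.finrank ℂ (Submodule.span ℂ (Set.range a ∪ Set.range b)) with hd
  have hkd : k ≤ d := Submodule.finrank_mono hWle
  have hd2r : d ≤ 2 * r := by
    have h1 := Set.Sum.elim_range a b
    have h2 := finrank_span_le_card (R := ℂ) (Set.range (Sum.elim a b))
    have h3 : (Set.range (Sum.elim a b)).toFinset.card ≤ 2 * r := by
      rw [Set.toFinset_range]
      refine le_trans Finset.card_image_le ?_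
      simp only [Finset.card_univ, Fintype.card_sum, Fintype.card_fin]
      omega
    have h4 : Module.finrank ℂ (Submodule.span ℂ (Set.range a ∪ Set.range b)) ≤ 2 * r := by
      rw [← h1]
      exact le_trans h2 h3
    rw [hd]
    exact h4
  rcases le_or_gt d k with hcase | hcase
  · exact (Submodule.eq_of_le_of_finrank_le hWle hcase).symm
  · exfalso
    have hd_eq : d = 2 * r := by omega
    have hli : LinearIndependent ℂ (Sum.elim a b) := by
      rw [linearIndependent_iff_card_eq_finrank_span]
      rw [Set.finrank, Set.Sum.elim_range]
      simp [← hd, hd_eq]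
      omega
    have hle2 := span_le_WQ ha hb hrep hli
    have : d ≤ k := Submodule.finrank_mono hle2
    omega


end Helpers

/-- well-definedness of the minimal space: any two minimal representations
of a homogeneous quadratic span the same space of linear forms. -/
theorem stmt_0 {n r : ℕ} (Q : MvPolynomial (Fin n) ℂ) (hQ : Q.IsHomogeneous 2)
    (a b a' b' : Fin r → MvPolynomial (Fin n) ℂ)
    (ha : ∀ i, IsLinForm (a i)) (hb : ∀ i, IsLinForm (b i))
    (ha' : ∀ i, IsLinForm (a' i)) (hb' : ∀ i, IsLinForm (b' i))
    (hrep : Q = ∑ i, a i * b i) (hrep' : Q = ∑ i, a' i * b' i)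
    (hmin : ∀ r' < r, ¬ HasRep Q r') :
    Submodule.span ℂ (Set.range a ∪ Set.range b) =
      Submodule.span ℂ (Set.range a' ∪ Set.range b') := by
  rw [minimal_span hQ a b ha hb hrep hmin, minimal_span hQ a' b' ha' hb' hrep' hmin]
end
end

section
/- Let P be a homogeneous irreducible quadratic polynomial over C and let a, b be linear forms. Suppose a finite product \prod_{i∈I} T_i of quadratic polynomials lies in the radical of the ideal generated by P and ab. Then either rank_s(P) = 2 and a ∈ MS(P), or there exists i ∈ I such that T_i = αP + ac for some linear form c and scalar α ∈ C. -/
open MvPolynomial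

noncomputable section

namespace Stmt7Aux

variable {σ : Type*}

/-- The "homogenization witness" map sending `X i ↦ (X i) · t`. Its `t`-coefficients are the
homogeneous components. -/
noncomputable def Phi : MvPolynomial σ ℂ →ₐ[ℂ] Polynomial (MvPolynomial σ ℂ) :=
  MvPolynomial.aeval (fun i => Polynomial.C (X i) * Polynomial.X)

lemma Phi_coeff (p : MvPolynomial σ ℂ) (d : ℕ) :
    (Phi p).coeff d = homogeneousComponent d p := by
  classical
  induction p using MvPolynomial.induction_on' with
  | add p q hp hq => simp [map_add, hp, hq]
  | monomial s c =>
    have hmono : Phi (monomial s c) =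
        Polynomial.C (monomial s c) * Polynomial.X ^ s.degree := by
      rw [Phi, aeval_monomial]
      have hprod : (s.prod fun i e => (Polynomial.C (X i : MvPolynomial σ ℂ) *
          Polynomial.X) ^ e) =
          Polynomial.C (s.prod fun i e => (X i : MvPolynomial σ ℂ) ^ e) *
            Polynomial.X ^ s.degree := by
        rw [Finsupp.prod, Finsupp.prod, Finsupp.degree]
        rw [Finset.prod_congr rfl
          (fun i _ => mul_pow (Polynomial.C (X i : MvPolynomial σ ℂ)) Polynomial.X (s i))]
        rw [Finset.prod_mul_distrib, Finset.prod_pow_eq_pow_sum]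
        simp only [← map_pow]
        rw [← map_prod]
        rfl
      rw [hprod]
      have halg : (algebraMap ℂ (Polynomial (MvPolynomial σ ℂ))) c
          = Polynomial.C (C c) := by
        rw [Polynomial.algebraMap_apply]
        rfl
      rw [halg, ← mul_assoc, ← map_mul, ← monomial_eq]
    rw [hmono]
    have hhc : homogeneousComponent d (monomial s c) =
        if d = s.degree then monomial s c else 0 := by
      refine homogeneousComponent_of_mem ?_
      rw [mem_homogeneousSubmodule]
      exact isHomogeneous_monomial c rfl
    rw [hhc, Polynomial.coeff_C_mul, Polynomial.coeff_X_pow]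
    split_ifs <;> simp

lemma Phi_ne_zero {p : MvPolynomial σ ℂ} (hp : p ≠ 0) : Phi p ≠ 0 := by
  intro h
  apply hp
  have hall : ∀ d, homogeneousComponent d p = 0 := fun d => by
    rw [← Phi_coeff, h, Polynomial.coeff_zero]
  calc p = ∑ i ∈ Finset.range (p.totalDegree + 1), homogeneousComponent i p :=
        (sum_homogeneousComponent p).symm
    _ = 0 := Finset.sum_eq_zero fun i _ => hall i

/-- Divisors of a nonzero homogeneous polynomial are homogeneous. -/
lemma isHomogeneous_of_mul_isHomogeneous {f g : MvPolynomial σ ℂ} {n : ℕ}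
    (hf : f ≠ 0) (hg : g ≠ 0) (h : (f * g).IsHomogeneous n) :
    ∃ df dg, df + dg = n ∧ f.IsHomogeneous df ∧ g.IsHomogeneous dg := by
  classical
  have hfg : f * g ≠ 0 := mul_ne_zero hf hg
  have hPf : Phi f ≠ 0 := Phi_ne_zero hf
  have hPg : Phi g ≠ 0 := Phi_ne_zero hg
  have hkey : Phi f * Phi g = Polynomial.monomial n (f * g) := by
    rw [← map_mul]
    ext d
    rw [Phi_coeff, Polynomial.coeff_monomial]
    rw [homogeneousComponent_of_mem ((mem_homogeneousSubmodule _ _).mpr h)]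
    split_ifs with h1 h2 h2
    · rfl
    · exact absurd h1.symm h2
    · exact absurd h2.symm h1
    · rfl
  have hnd : (Phi f).natDegree + (Phi g).natDegree = n := by
    rw [← Polynomial.natDegree_mul hPf hPg, hkey, Polynomial.natDegree_monomial_eq n hfg]
  have hntd : (Phi f).natTrailingDegree + (Phi g).natTrailingDegree = n := by
    rw [← Polynomial.natTrailingDegree_mul hPf hPg, hkey,
      Polynomial.natTrailingDegree_monomial hfg]
  have hf1 : (Phi f).natTrailingDegree = (Phi f).natDegree := by
    have := Polynomial.natTrailingDegree_le_natDegree (Phi f)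
    have := Polynomial.natTrailingDegree_le_natDegree (Phi g)
    omega
  have hg1 : (Phi g).natTrailingDegree = (Phi g).natDegree := by
    have := Polynomial.natTrailingDegree_le_natDegree (Phi f)
    have := Polynomial.natTrailingDegree_le_natDegree (Phi g)
    omega
  have homog : ∀ (p : MvPolynomial σ ℂ), p ≠ 0 →
      (Phi p).natTrailingDegree = (Phi p).natDegree →
      p.IsHomogeneous (Phi p).natDegree := by
    intro p hp0 htd
    have hall : ∀ d, d ≠ (Phi p).natDegree → homogeneousComponent d p = 0 := by
      intro d hd
      rw [← Phi_coeff]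
      rcases lt_or_gt_of_ne hd with hlt | hgt
      · exact Polynomial.coeff_eq_zero_of_lt_natTrailingDegree (by omega)
      · exact Polynomial.coeff_eq_zero_of_natDegree_lt hgt
    have hpc : p = homogeneousComponent (Phi p).natDegree p := by
      conv_lhs => rw [← sum_homogeneousComponent p]
      refine Finset.sum_eq_single _ (fun b _ hb => hall b hb) (fun hnm => ?_)
      refine homogeneousComponent_eq_zero _ p ?_
      simp only [Finset.mem_range, not_lt] at hnm
      omega
    have hres := homogeneousComponent_isHomogeneous (Phi p).natDegree p
    rwa [← hpc] at hres
  refine ⟨(Phi f).natDegree, (Phi g).natDegree, hnd, homog f hf hf1, homog g hg hg1⟩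

lemma isHomog_zero_eq_C {p : MvPolynomial σ ℂ} (hp : p.IsHomogeneous 0) :
    ∃ c : ℂ, p = C c := by
  classical
  refine ⟨coeff 0 p, ?_⟩
  ext d
  by_cases hd : d = 0
  · subst hd; simp
  · rw [hp.coeff_eq_zero (by rwa [Ne, Finsupp.degree_eq_zero_iff]), coeff_C,
      if_neg (fun h => hd h.symm)]

lemma not_isUnit_of_isHomogeneous {p : MvPolynomial σ ℂ} {m : ℕ}
    (hp : p.IsHomogeneous m) (hm : m ≠ 0) : ¬ IsUnit p := by
  intro h
  obtain ⟨q, hq⟩ := h.exists_right_inv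
  have h1 := congrArg constantCoeff hq
  rw [map_mul, map_one] at h1
  have h0 : constantCoeff p = 0 := by
    rw [constantCoeff_eq]
    exact hp.coeff_eq_zero (by rw [map_zero]; exact fun h => hm h.symm)
  rw [h0, zero_mul] at h1
  exact zero_ne_one h1

lemma degree_one_single {d : σ →₀ ℕ} (hd : d.degree = 1) :
    ∃ k, d = Finsupp.single k 1 := by
  classical
  have hne : d.support.Nonempty := by
    rcases Finset.eq_empty_or_nonempty d.support with h | h
    · exfalso
      rw [Finsupp.support_eq_empty] at h
      rw [h, map_zero] at hd
      exact one_ne_zero hd.symm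
    · exact h
  obtain ⟨k, hk⟩ := hne
  have hk0 : d k ≠ 0 := Finsupp.mem_support_iff.mp hk
  have hk1 : d k = 1 := by
    have hle : d k ≤ d.degree := Finset.single_le_sum (fun i _ => Nat.zero_le _) hk
    omega
  refine ⟨k, ?_⟩
  ext j
  by_cases hj : j = k
  · subst hj; simp [hk1]
  · rw [Finsupp.single_eq_of_ne' (fun h => hj h.symm)]
    by_contra hdj
    have hjk : ({j, k} : Finset σ) ⊆ d.support := by
      intro x hx
      rcases Finset.mem_insert.mp hx with rfl | hx
      · exact Finsupp.mem_support_iff.mpr hdj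
      · rwa [Finset.mem_singleton.mp hx]
    have hsum : d j + d k ≤ d.degree := by
      rw [Finsupp.degree, ← Finset.sum_pair hj]
      exact Finset.sum_le_sum_of_subset hjk
    omega

lemma linForm_eq_sum {n : ℕ} {a : MvPolynomial (Fin n) ℂ} (ha : IsLinForm a) :
    a = ∑ j, C (coeff (Finsupp.single j 1) a) * X j := by
  classical
  ext d
  rw [coeff_sum]
  simp only [coeff_C_mul, coeff_X']
  by_cases hd : ∃ k, d = Finsupp.single k 1
  · obtain ⟨k, rfl⟩ := hd
    rw [Finset.sum_eq_single k]
    · rw [if_pos rfl, mul_one]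
    · intro j _ hj
      rw [if_neg, mul_zero]
      intro h
      exact hj (Finsupp.single_left_injective one_ne_zero h)
    · intro h; exact absurd (Finset.mem_univ k) h
  · rw [Finset.sum_eq_zero]
    · refine ha.coeff_eq_zero ?_
      intro h
      obtain ⟨k, hk⟩ := degree_one_single h
      exact hd ⟨k, hk⟩
    · intro j _
      rw [if_neg, mul_zero]
      exact fun h => hd ⟨j, h.symm⟩

section rho

variable {n : ℕ}

/-- Substitution realizing reduction mod the linear form `a` (with `k` a coordinate on which
`a` has nonzero coefficient). -/
noncomputable def gfun (a : MvPolynomial (Fin n) ℂ) (k : Fin n) :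
    Fin n → MvPolynomial (Fin n) ℂ :=
  fun j => if j = k then X k - (coeff (Finsupp.single k 1) a)⁻¹ • a else X j

noncomputable def rho (a : MvPolynomial (Fin n) ℂ) (k : Fin n) :
    MvPolynomial (Fin n) ℂ →ₐ[ℂ] MvPolynomial (Fin n) ℂ :=
  MvPolynomial.aeval (gfun a k)

variable {a : MvPolynomial (Fin n) ℂ} {k : Fin n}

lemma gfun_isLinForm (ha : IsLinForm a) : ∀ j, IsLinForm (gfun a k j) := by
  intro j
  unfold gfun
  split_ifs with h
  · refine (isHomogeneous_X _ _).sub ?_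
    rw [smul_eq_C_mul]
    simpa using (isHomogeneous_C (Fin n) ((coeff (Finsupp.single k 1) a)⁻¹)).mul ha
  · exact isHomogeneous_X _ _

lemma rho_isHomogeneous (ha : IsLinForm a) {p : MvPolynomial (Fin n) ℂ} {m : ℕ}
    (hp : p.IsHomogeneous m) : (rho a k p).IsHomogeneous m := by
  simpa [rho] using hp.aeval (gfun a k) (gfun_isLinForm ha)

lemma rho_X (j : Fin n) : rho a k (X j) = gfun a k j := aeval_X _ j

lemma rho_C (c : ℂ) : rho a k (C c) = C c := by
  show MvPolynomial.aeval (gfun a k) (C c) = C c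
  rw [aeval_C, MvPolynomial.algebraMap_eq]

lemma rho_a (ha : IsLinForm a) (hk : coeff (Finsupp.single k 1) a ≠ 0) :
    rho a k a = 0 := by
  classical
  have h1 := congrArg (rho a k) (linForm_eq_sum ha)
  rw [h1, map_sum]
  simp only [map_mul, rho_C]
  have hX : ∀ j, rho a k (X j) = gfun a k j := fun j => aeval_X _ j
  simp only [hX]
  have hsplit : ∀ j : Fin n, C (coeff (Finsupp.single j 1) a) * gfun a k j =
      C (coeff (Finsupp.single j 1) a) * X j -
        (if j = k then C (coeff (Finsupp.single k 1) a) *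
          ((coeff (Finsupp.single k 1) a)⁻¹ • a) else 0) := by
    intro j
    unfold gfun
    split_ifs with h
    · subst h; rw [mul_sub]
    · rw [sub_zero]
  rw [Finset.sum_congr rfl (fun j _ => hsplit j), Finset.sum_sub_distrib,
    ← linForm_eq_sum ha, Finset.sum_ite_eq' Finset.univ k]
  rw [if_pos (Finset.mem_univ k)]
  rw [smul_eq_C_mul, ← mul_assoc, ← map_mul, mul_inv_cancel₀ hk, map_one, one_mul,
    sub_self]

lemma rho_gfun (ha : IsLinForm a) (hk : coeff (Finsupp.single k 1) a ≠ 0) (j : Fin n) :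
    rho a k (gfun a k j) = gfun a k j := by
  unfold gfun
  split_ifs with h
  · rw [map_sub, smul_eq_C_mul, map_mul, rho_C, rho_a ha hk, mul_zero, sub_zero, rho_X]
    simp [gfun, smul_eq_C_mul]
  · rw [rho_X]
    unfold gfun
    rw [if_neg h]

lemma rho_rho (ha : IsLinForm a) (hk : coeff (Finsupp.single k 1) a ≠ 0)
    (p : MvPolynomial (Fin n) ℂ) : rho a k (rho a k p) = rho a k p := by
  induction p using MvPolynomial.induction_on with
  | C c => rw [rho_C, rho_C]
  | add p q hp hq => rw [map_add, map_add, hp, hq]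
  | mul_X p j hp =>
    rw [map_mul, map_mul]
    rw [show rho a k (X j) = gfun a k j from aeval_X _ j, hp, rho_gfun ha hk]

lemma dvd_sub_rho (ha : IsLinForm a) (p : MvPolynomial (Fin n) ℂ) :
    a ∣ p - rho a k p := by
  induction p using MvPolynomial.induction_on with
  | C c => rw [rho_C, sub_self]; exact dvd_zero a
  | add p q hp hq =>
    rw [map_add]
    have : p + q - (rho a k p + rho a k q) = (p - rho a k p) + (q - rho a k q) := by ring
    rw [this]
    exact dvd_add hp hq
  | mul_X p j hp =>
    rw [map_mul, show rho a k (X j) = gfun a k j from aeval_X _ j]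
    have heq : p * X j - rho a k p * gfun a k j =
        (p - rho a k p) * X j + rho a k p * (X j - gfun a k j) := by ring
    rw [heq]
    refine dvd_add (Dvd.dvd.mul_right hp _) (Dvd.dvd.mul_left ?_ _)
    unfold gfun
    split_ifs with h
    · rw [h]
      have : X k - (X k - (coeff (Finsupp.single k 1) a)⁻¹ • a) =
          (coeff (Finsupp.single k 1) a)⁻¹ • a := by ring
      rw [this, smul_eq_C_mul]
      exact Dvd.dvd.mul_left dvd_rfl _
    · rw [sub_self]
      exact dvd_zero a

lemma rho_eq_zero_iff (ha : IsLinForm a) (hk : coeff (Finsupp.single k 1) a ≠ 0)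
    (p : MvPolynomial (Fin n) ℂ) : rho a k p = 0 ↔ a ∣ p := by
  constructor
  · intro h
    have := dvd_sub_rho (k := k) ha p
    rwa [h, sub_zero] at this
  · rintro ⟨u, rfl⟩
    rw [map_mul, rho_a ha hk, zero_mul]

end rho

/-- If a nonzero homogeneous `q` of degree `m` divides a homogeneous `p` of degree `m + j`,
the cofactor is homogeneous of degree `j`. -/
lemma exists_homog_factor {q p : MvPolynomial σ ℂ} {m j : ℕ} (hq : q.IsHomogeneous m)
    (hq0 : q ≠ 0) (hp : p.IsHomogeneous (m + j)) (hdvd : q ∣ p) :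
    ∃ u, u.IsHomogeneous j ∧ p = q * u := by
  obtain ⟨u, rfl⟩ := hdvd
  by_cases hu : u = 0
  · subst hu
    exact ⟨0, isHomogeneous_zero _ _ _, rfl⟩
  · obtain ⟨df, dg, hsum, hqf, hug⟩ := isHomogeneous_of_mul_isHomogeneous hq0 hu hp
    have hdf : df = m := hqf.inj_right hq hq0
    have hdg : dg = j := by omega
    exact ⟨u, hdg ▸ hug, rfl⟩

end Stmt7Aux

open Stmt7Aux

/-- if a product of quadratics lies in `√⟨P, ab⟩` for an irreducible quadratic
`P` and linear forms `a, b`, then either `rank_s P = 2` and `a ∈ MS(P)`, or some factor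
`T i` equals `αP + ac` for a linear form `c` and scalar `α`. -/
theorem stmt_7 {n : ℕ} (P : MvPolynomial (Fin n) ℂ)
    (hP2 : P.IsHomogeneous 2) (hPirr : Irreducible P)
    (a b : MvPolynomial (Fin n) ℂ) (hla : IsLinForm a) (hlb : IsLinForm b)
    {ι : Type*} (I : Finset ι) (T : ι → MvPolynomial (Fin n) ℂ)
    (hT : ∀ i ∈ I, (T i).IsHomogeneous 2)
    (hprod : (∏ i ∈ I, T i) ∈ (Ideal.span {P, a * b}).radical) :
    (rankS P = 2 ∧ a ∈ MS P) ∨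
      ∃ i ∈ I, ∃ (c : MvPolynomial (Fin n) ℂ) (α : ℂ),
        IsLinForm c ∧ T i = α • P + a * c := by
  classical
  obtain ⟨N, hN⟩ := Ideal.mem_radical_iff.mp hprod
  have hspan : (∏ i ∈ I, T i) ^ N ∈ Ideal.span {P, a} := by
    refine Ideal.span_le.mpr ?_ hN
    rintro x hx
    simp only [Set.mem_insert_iff, Set.mem_singleton_iff] at hx
    rcases hx with rfl | rfl
    · exact Ideal.subset_span (by simp)
    · exact Ideal.mul_mem_right b _ (Ideal.subset_span (by simp))
  obtain ⟨u, v, huv⟩ := Ideal.mem_span_pair.mp hspan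
  have hP0 : P ≠ 0 := hPirr.ne_zero
  have hPprime : Prime P := UniqueFactorizationMonoid.irreducible_iff_prime.mp hPirr
  by_cases ha0 : a = 0
  · right
    subst ha0
    have hdvd : P ∣ (∏ i ∈ I, T i) ^ N := ⟨u, by rw [← huv]; ring⟩
    obtain ⟨i, hiI, hdi⟩ := hPprime.exists_mem_finset_dvd (hPprime.dvd_of_dvd_pow hdvd)
    obtain ⟨w, hw, hTi⟩ := exists_homog_factor hP2 hP0
      (show (T i).IsHomogeneous (2 + 0) from hT i hiI) hdi
    obtain ⟨α, rfl⟩ := isHomog_zero_eq_C hw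
    exact ⟨i, hiI, 0, α, isHomogeneous_zero _ _ _,
      by rw [hTi, smul_eq_C_mul]; ring⟩
  · have hck : ∃ k, coeff (Finsupp.single k 1) a ≠ 0 := by
      by_contra h
      push_neg at h
      apply ha0
      rw [linForm_eq_sum hla]
      refine Finset.sum_eq_zero fun j _ => ?_
      rw [h j, map_zero, zero_mul]
    obtain ⟨k, hk⟩ := hck
    have hker : ∀ p, rho a k p = 0 ↔ a ∣ p := rho_eq_zero_iff hla hk
    set Q := rho a k P with hQdef
    have hQ2 : Q.IsHomogeneous 2 := rho_isHomogeneous hla hP2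
    by_cases hQ0 : Q = 0
    · exfalso
      obtain ⟨w, hPw⟩ := (hker P).mp hQ0
      have hw0 : w ≠ 0 := by rintro rfl; rw [mul_zero] at hPw; exact hP0 hPw
      rcases hPirr.isUnit_or_isUnit hPw with h | h
      · exact not_isUnit_of_isHomogeneous hla one_ne_zero h
      · obtain ⟨df, dg, hs, hf, hg⟩ :=
          isHomogeneous_of_mul_isHomogeneous ha0 hw0 (hPw ▸ hP2)
        have hdf : df = 1 := hf.inj_right hla ha0
        exact not_isUnit_of_isHomogeneous hg (by omega) h
    · by_cases hQirr : Irreducible Q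
      · right
        have hQprime : Prime Q := UniqueFactorizationMonoid.irreducible_iff_prime.mp hQirr
        have hrhopow : (∏ i ∈ I, rho a k (T i)) ^ N = rho a k u * Q := by
          have := congrArg (rho a k) huv
          rw [map_add, map_mul, map_mul, rho_a hla hk, mul_zero, add_zero,
            map_pow, map_prod] at this
          rw [← this, ← hQdef]
        have hdvd : Q ∣ (∏ i ∈ I, rho a k (T i)) ^ N := ⟨rho a k u, by rw [hrhopow]; ring⟩
        obtain ⟨i, hiI, hdi⟩ := hQprime.exists_mem_finset_dvd (hQprime.dvd_of_dvd_pow hdvd)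
        obtain ⟨w, hw, hTi⟩ := exists_homog_factor hQ2 hQ0
          (show (rho a k (T i)).IsHomogeneous (2 + 0) from rho_isHomogeneous hla (hT i hiI))
          hdi
        obtain ⟨α, rfl⟩ := isHomog_zero_eq_C hw
        have hkerTi : rho a k (T i - C α * P) = 0 := by
          rw [map_sub, map_mul, rho_C, hTi, ← hQdef]
          ring
        obtain ⟨c, hc, heq⟩ := exists_homog_factor hla ha0
          (show (T i - C α * P).IsHomogeneous (1 + 1) from
            (hT i hiI).sub (by simpa using (isHomogeneous_C (Fin n) α).mul hP2))
          ((hker _).mp hkerTi)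
        refine ⟨i, hiI, c, α, hc, ?_⟩
        rw [smul_eq_C_mul]
        linear_combination heq
      · left
        have hQnu : ¬ IsUnit Q := not_isUnit_of_isHomogeneous hQ2 two_ne_zero
        obtain ⟨f, g, hfg, hfu, hgu⟩ : ∃ f g, Q = f * g ∧ ¬IsUnit f ∧ ¬IsUnit g := by
          rw [irreducible_iff] at hQirr
          push_neg at hQirr
          exact hQirr hQnu
        have hf0 : f ≠ 0 := by rintro rfl; rw [zero_mul] at hfg; exact hQ0 hfg
        have hg0 : g ≠ 0 := by rintro rfl; rw [mul_zero] at hfg; exact hQ0 hfg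
        obtain ⟨df, dg, hsum, hfh, hgh⟩ :=
          isHomogeneous_of_mul_isHomogeneous hf0 hg0 (hfg ▸ hQ2)
        have hdf : df = 1 := by
          by_contra hdf
          rcases Nat.eq_zero_or_pos df with h0 | hpos
          · obtain ⟨cf, rfl⟩ := isHomog_zero_eq_C (h0 ▸ hfh)
            have : cf ≠ 0 := fun h => hf0 (by rw [h, map_zero])
            exact hfu (IsUnit.map C (isUnit_iff_ne_zero.mpr this))
          · rcases Nat.eq_zero_or_pos dg with h0 | hpos'
            · obtain ⟨cg, rfl⟩ := isHomog_zero_eq_C (h0 ▸ hgh)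
              have : cg ≠ 0 := fun h => hg0 (by rw [h, map_zero])
              exact hgu (IsUnit.map C (isUnit_iff_ne_zero.mpr this))
            · omega
        have hdg : dg = 1 := by omega
        set l := rho a k f with hl
        set m' := rho a k g with hm'
        have hll : IsLinForm l := rho_isHomogeneous hla (hdf ▸ hfh)
        have hlm : IsLinForm m' := rho_isHomogeneous hla (hdg ▸ hgh)
        have hQlm : Q = l * m' := by
          have := rho_rho hla hk P
          rw [← hQdef] at this
          rw [← this, hQdef]
          conv_lhs => rw [show rho a k P = Q from rfl, hfg]
          rw [map_mul]
        have hkerP : rho a k (P - l * m') = 0 := by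
          rw [map_sub, map_mul, hl, hm', rho_rho hla hk, rho_rho hla hk,
            ← hl, ← hm', ← hQdef, hQlm]
          ring
        obtain ⟨c, hc, heq⟩ := exists_homog_factor hla ha0
          (show (P - l * m').IsHomogeneous (1 + 1) from
            hP2.sub (by simpa using hll.mul hlm))
          ((hker _).mp hkerP)
        have hPrep : P = l * m' + a * c := by
          have := sub_eq_iff_eq_add.mp heq
          rw [this]; ring
        have h2lin : ∀ j : Fin 2, IsLinForm (![l, a] j) := by
          intro j; fin_cases j
          · exact hll
          · exact hla
        have h2lin' : ∀ j : Fin 2, IsLinForm (![m', c] j) := by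
          intro j; fin_cases j
          · exact hlm
          · exact hc
        have hsum2 : P = ∑ j : Fin 2, ![l, a] j * ![m', c] j := by
          rw [Fin.sum_univ_two]
          simpa using hPrep
        have hasrep : HasRep P 2 := ⟨![l, a], ![m', c], h2lin, h2lin', hsum2⟩
        have hnot0 : ¬ HasRep P 0 := by
          rintro ⟨A, B, _, _, hsum0⟩
          simp at hsum0
          exact hP0 hsum0
        have hnot1 : ¬ HasRep P 1 := by
          rintro ⟨A, B, hA, hB, hsum1⟩
          rw [Fin.sum_univ_one] at hsum1
          rcases hPirr.isUnit_or_isUnit hsum1 with h | h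
          · exact not_isUnit_of_isHomogeneous (hA 0) one_ne_zero h
          · exact not_isUnit_of_isHomogeneous (hB 0) one_ne_zero h
        have hrank : rankS P = 2 := by
          have hle : rankS P ≤ 2 :=
            Nat.sInf_le (show 2 ∈ {r | HasRep P r} from hasrep)
          have hmem : HasRep P (rankS P) :=
            Nat.sInf_mem (⟨2, hasrep⟩ : Set.Nonempty {r | HasRep P r})
          have h0 : rankS P ≠ 0 := fun h => hnot0 (h ▸ hmem)
          have h1 : rankS P ≠ 1 := fun h => hnot1 (h ▸ hmem)
          omega
        refine ⟨hrank, ?_⟩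
        set A : Fin (rankS P) → MvPolynomial (Fin n) ℂ :=
          fun i => ![l, a] (Fin.cast hrank i) with hA
        set B : Fin (rankS P) → MvPolynomial (Fin n) ℂ :=
          fun i => ![m', c] (Fin.cast hrank i) with hB
        have hAl : ∀ i, IsLinForm (A i) := fun i => h2lin _
        have hBl : ∀ i, IsLinForm (B i) := fun i => h2lin' _
        have hsumA : P = ∑ i, A i * B i := by
          rw [hA, hB]
          rw [Fin.sum_congr' (fun j : Fin 2 => ![l, a] j * ![m', c] j) hrank]
          exact hsum2
        have hmemspan : a ∈ Submodule.span ℂ (Set.range A ∪ Set.range B) := by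
          refine Submodule.subset_span (Or.inl ⟨Fin.cast hrank.symm 1, ?_⟩)
          have hcast : Fin.cast hrank (Fin.cast hrank.symm 1) = 1 := by
            apply Fin.ext
            simp
          rw [hA]
          show ![l, a] (Fin.cast hrank (Fin.cast hrank.symm 1)) = a
          rw [hcast]
          simp
        exact Submodule.mem_iSup_of_mem ⟨(A, B), hAl, hBl, hsumA⟩ hmemspan
end
end

section
/- Let P and Q be irreducible homogeneous quadratic polynomials over C with v_1ℓ_1 + v_2ℓ_2 = P and Q ∈ ⟨v_1, v_2⟩, and let A ∈ \sqrt{⟨P,Q⟩} be a polynomial. If A depends only on the linear forms in V = span{v_1, v_2, u_1, u_2} = MS(Q) (where Q = v_1 u_1 + v_2 u_2 with u_1 ∉ span{v_1,v_2}, and ℓ_1 ∉ MS(Q)), then A ∈ ⟨Q⟩. -/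
open MvPolynomial

noncomputable section

lemma linform_not_unit {σ : Type*} {p : MvPolynomial σ ℂ} (hp : IsLinForm p) : ¬ IsUnit p := by
  intro h
  have h0 : constantCoeff p = 0 := hp.coeff_eq_zero (by simp)
  have := h.map (constantCoeff (σ := σ) (R := ℂ))
  rw [h0] at this
  exact this.ne_zero rfl

lemma finsupp_degree_one {σ : Type*} {m : σ →₀ ℕ} (hdeg : Finsupp.degree m = 1) :
    ∃ i, m = Finsupp.single i 1 := by
  classical
  have hne : m ≠ 0 := by
    intro h; rw [h, map_zero] at hdeg; exact one_ne_zero hdeg.symm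
  obtain ⟨i, hi⟩ := Finsupp.support_nonempty_iff.mpr hne
  have hisum : m i + ∑ x ∈ m.support.erase i, m x = Finsupp.degree m :=
    Finset.add_sum_erase _ _ hi
  have hipos : 1 ≤ m i := Nat.one_le_iff_ne_zero.mpr (Finsupp.mem_support_iff.mp hi)
  have herase : ∑ x ∈ m.support.erase i, m x = 0 := by omega
  have hmi : m i = 1 := by omega
  refine ⟨i, Finsupp.eq_single_iff.mpr ⟨?_, hmi⟩⟩
  intro j hj
  simp only [Finset.mem_singleton]
  by_contra hji
  have hj' : j ∈ m.support.erase i := Finset.mem_erase.mpr ⟨hji, hj⟩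
  have := Finset.single_le_sum (f := fun x => m x) (fun _ _ => Nat.zero_le _) hj'
  have hjpos : 1 ≤ m j := Nat.one_le_iff_ne_zero.mpr (Finsupp.mem_support_iff.mp hj)
  omega

lemma linform_mem_span {σ : Type*} {p : MvPolynomial σ ℂ} (hp : IsLinForm p) :
    p ∈ Submodule.span ℂ (Set.range (X : σ → MvPolynomial σ ℂ)) := by
  rw [← p.support_sum_monomial_coeff]
  apply Submodule.sum_mem
  intro m hm
  have hdeg : Finsupp.degree m = 1 := by
    rw [Finsupp.degree_eq_weight_one]
    exact hp (mem_support_iff.mp hm)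
  obtain ⟨i, rfl⟩ := finsupp_degree_one hdeg
  have : (monomial (Finsupp.single i 1)) (coeff (Finsupp.single i 1) p)
      = (coeff (Finsupp.single i 1) p) • X i := by
    rw [smul_eq_C_mul, show (X i : MvPolynomial σ ℂ) = monomial (Finsupp.single i 1) 1 from rfl, C_mul_monomial, mul_one]
  rw [this]
  exact Submodule.smul_mem _ _ (Submodule.subset_span ⟨i, rfl⟩)

lemma hc_degree_one_ne {σ : Type*} (Q t : MvPolynomial σ ℂ) (hQ2 : Q.IsHomogeneous 2)
    (w : MvPolynomial σ ℂ) (hw : IsLinForm w) (ht : w = Q * t) : w = 0 := by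
  have h1 : homogeneousComponent 1 w = w := by
    rw [homogeneousComponent_of_mem hw]
    simp
  rw [← h1, ht]
  conv_lhs => rw [← sum_homogeneousComponent t]
  rw [Finset.mul_sum, map_sum]
  apply Finset.sum_eq_zero
  intro i _
  have : (Q * homogeneousComponent i t).IsHomogeneous (2 + i) :=
    hQ2.mul (homogeneousComponent_isHomogeneous i t)
  rw [homogeneousComponent_of_mem this, if_neg (by omega)]

set_option maxHeartbeats 1000000 in
set_option synthInstance.maxHeartbeats 400000 in
/-- Claim `cla:ideal-V`: with `P = v₁ℓ₁ + v₂ℓ₂`, `Q = v₁u₁ + v₂u₂`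
irreducible quadratics, `u₁ ∉ span{v₁,v₂}`, `ℓ₁ ∉ MS(Q) = span{v₁,v₂,u₁,u₂}`, any
`A ∈ √⟨P,Q⟩` depending only on the linear forms `v₁,v₂,u₁,u₂` lies in `⟨Q⟩`. -/
theorem stmt_10 {n : ℕ} (v₁ v₂ u₁ u₂ ℓ₁ ℓ₂ : MvPolynomial (Fin n) ℂ)
    (hv₁ : IsLinForm v₁) (hv₂ : IsLinForm v₂) (hu₁ : IsLinForm u₁)
    (hu₂ : IsLinForm u₂) (hℓ₁ : IsLinForm ℓ₁) (hℓ₂ : IsLinForm ℓ₂)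
    (P Q A : MvPolynomial (Fin n) ℂ)
    (hP : P = v₁ * ℓ₁ + v₂ * ℓ₂) (hQ : Q = v₁ * u₁ + v₂ * u₂)
    (hPirr : Irreducible P) (hQirr : Irreducible Q)
    (hu₁span : u₁ ∉ Submodule.span ℂ ({v₁, v₂} : Set (MvPolynomial (Fin n) ℂ)))
    (hMSQ : MS Q = Submodule.span ℂ ({v₁, v₂, u₁, u₂} : Set (MvPolynomial (Fin n) ℂ)))
    (hℓ₁span : ℓ₁ ∉ Submodule.span ℂ ({v₁, v₂, u₁, u₂} : Set (MvPolynomial (Fin n) ℂ)))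
    (hA : A ∈ (Ideal.span {P, Q}).radical)
    (hAonV : A ∈ Algebra.adjoin ℂ ({v₁, v₂, u₁, u₂} : Set (MvPolynomial (Fin n) ℂ))) :
    A ∈ Ideal.span ({Q} : Set (MvPolynomial (Fin n) ℂ)) := by
  classical
  -- the dual functional
  obtain ⟨f₀, hf₀ne, hf₀bot⟩ :=
    (Submodule.span ℂ ({v₁, v₂, u₁, u₂} : Set (MvPolynomial (Fin n) ℂ))).exists_dual_map_eq_bot_of_notMem
      hℓ₁span inferInstance
  set f : Module.Dual ℂ (MvPolynomial (Fin n) ℂ) := (f₀ ℓ₁)⁻¹ • f₀ with hf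
  have hfW : ∀ x ∈ Submodule.span ℂ ({v₁, v₂, u₁, u₂} : Set (MvPolynomial (Fin n) ℂ)),
      f x = 0 := by
    intro x hx
    have : f₀ x ∈ (Submodule.span ℂ ({v₁, v₂, u₁, u₂} :
        Set (MvPolynomial (Fin n) ℂ))).map f₀ := Submodule.mem_map_of_mem hx
    rw [hf₀bot, Submodule.mem_bot] at this
    simp [hf, this]
  have hfv₁ : f v₁ = 0 := hfW _ (Submodule.subset_span (by simp))
  have hfv₂ : f v₂ = 0 := hfW _ (Submodule.subset_span (by simp))
  have hfu₁ : f u₁ = 0 := hfW _ (Submodule.subset_span (by simp))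
  have hfu₂ : f u₂ = 0 := hfW _ (Submodule.subset_span (by simp))
  have hfℓ₁ : f ℓ₁ = 1 := by simp [hf, inv_mul_cancel₀ hf₀ne]
  set c : ℂ := f ℓ₂ with hc
  set w : MvPolynomial (Fin n) ℂ := v₁ + C c * v₂ with hwdef
  have hwlin : IsLinForm w := hv₁.add (hv₂.C_mul c)
  have hQ2 : Q.IsHomogeneous 2 := by
    rw [hQ]; exact (hv₁.mul hu₁).add (hv₂.mul hu₂)
  -- w ≠ 0
  have hw0 : w ≠ 0 := by
    intro h
    have hv₁eq : v₁ = -(C c * v₂) := by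
      rw [eq_neg_iff_add_eq_zero]; rw [hwdef] at h; exact h
    have hfac : Q = v₂ * (u₂ - C c * u₁) := by rw [hQ, hv₁eq]; ring
    rcases hQirr.isUnit_or_isUnit hfac with h1 | h1
    · exact linform_not_unit hv₂ h1
    · exact linform_not_unit (hu₂.sub (hu₁.C_mul c)) h1
  -- Q does not divide w
  have hQnw : ¬ Q ∣ w := by
    rintro ⟨t, ht⟩
    exact hw0 (hc_degree_one_ne Q t hQ2 w hwlin ht)
  -- Q is prime
  have hQprime : Prime Q := UniqueFactorizationMonoid.irreducible_iff_prime.mp hQirr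
  -- the localization
  set L := Localization.Away w with hL
  set ι : MvPolynomial (Fin n) ℂ →+* L := algebraMap (MvPolynomial (Fin n) ℂ) L with hι
  set j : L := IsLocalization.Away.invSelf (S := L) w with hj
  have hwinv : ι w * j = 1 := IsLocalization.Away.mul_invSelf w
  set Φ : MvPolynomial (Fin n) ℂ →ₐ[ℂ] L := aeval (fun i => ι (X i) - algebraMap ℂ L (f (X i)) * (ι P * j)) with hΦ
  -- Φ on linear forms
  have hΦlin : ∀ p : MvPolynomial (Fin n) ℂ, IsLinForm p → Φ p = ι p - algebraMap ℂ L (f p) * (ι P * j) := by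
    intro p hp
    refine Submodule.span_induction (p := fun p _ => Φ p = ι p - algebraMap ℂ L (f p) * (ι P * j))
      ?_ ?_ ?_ ?_ (linform_mem_span hp)
    · rintro x ⟨i, rfl⟩
      rw [hΦ]; simp
    · simp
    · intro x y _ _ hx hy
      rw [map_add, map_add, map_add, map_add, hx, hy]; ring
    · intro a x _ hx
      have h1 : Φ (a • x) = a • Φ x := map_smul Φ a x
      have h2 : f (a • x) = a * f x := by simp
      have h3 : ι (a • x) = algebraMap ℂ L a * ι x := by
        rw [Algebra.smul_def, map_mul, ← IsScalarTower.algebraMap_apply]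
      rw [h1, hx, h2, h3, map_mul]
      simp only [smul_sub, Algebra.smul_def]
      ring
  have hΦv₁ : Φ v₁ = ι v₁ := by rw [hΦlin v₁ hv₁, hfv₁]; simp
  have hΦv₂ : Φ v₂ = ι v₂ := by rw [hΦlin v₂ hv₂, hfv₂]; simp
  have hΦu₁ : Φ u₁ = ι u₁ := by rw [hΦlin u₁ hu₁, hfu₁]; simp
  have hΦu₂ : Φ u₂ = ι u₂ := by rw [hΦlin u₂ hu₂, hfu₂]; simp
  have hΦℓ₁ : Φ ℓ₁ = ι ℓ₁ - ι P * j := by rw [hΦlin ℓ₁ hℓ₁, hfℓ₁]; simp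
  have hΦℓ₂ : Φ ℓ₂ = ι ℓ₂ - algebraMap ℂ L c * (ι P * j) := by exact hΦlin ℓ₂ hℓ₂
  -- image of w
  have hιw : ι w = ι v₁ + algebraMap ℂ L c * ι v₂ := by
    have h0 := congrArg ι hwdef
    rw [h0, map_add, map_mul]
    congr 1
  -- Φ P = 0
  have hΦP : Φ P = 0 := by
    have e1 : ι P = ι v₁ * ι ℓ₁ + ι v₂ * ι ℓ₂ := by rw [hP, map_add, map_mul, map_mul]
    have e2 : (ι v₁ + algebraMap ℂ L c * ι v₂) * j = 1 := by rw [← hιw]; exact hwinv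
    have e0 : Φ P = Φ v₁ * Φ ℓ₁ + Φ v₂ * Φ ℓ₂ := by
      conv_lhs => rw [hP]
      rw [map_add, map_mul, map_mul]
    rw [e0, hΦv₁, hΦv₂, hΦℓ₁, hΦℓ₂]
    linear_combination -e1 - ι P * e2
  -- Φ Q = ι Q
  have hΦQ : Φ Q = ι Q := by
    have e0 : Φ Q = Φ v₁ * Φ u₁ + Φ v₂ * Φ u₂ := by
      conv_lhs => rw [hQ]
      rw [map_add, map_mul, map_mul]
    rw [e0, hΦv₁, hΦv₂, hΦu₁, hΦu₂, hQ, map_add, map_mul, map_mul]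
  -- Φ A = ι A
  have hΦA : Φ A = ι A := by
    refine Algebra.adjoin_induction (p := fun x _ => Φ x = ι x) ?_ ?_ ?_ ?_ hAonV
    · intro x hx
      simp only [Set.mem_insert_iff, Set.mem_singleton_iff] at hx
      rcases hx with h | h | h | h
      · rw [h, hΦv₁]
      · rw [h, hΦv₂]
      · rw [h, hΦu₁]
      · rw [show x = u₂ from h, hΦu₂]
    · intro r
      rw [AlgHom.commutes]
      rfl
    · intro x y _ _ hx hy; rw [map_add, map_add, hx, hy]
    · intro x y _ _ hx hy; rw [map_mul, map_mul, hx, hy]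
  -- main computation
  obtain ⟨k, hk⟩ := Ideal.mem_radical_iff.mp hA
  obtain ⟨a, b, hab⟩ := Ideal.mem_span_pair.mp hk
  have him : Φ b * ι Q = ι A ^ k := by
    have := congrArg Φ hab
    rw [map_add, map_mul, map_mul, map_pow, hΦP, hΦQ, hΦA, mul_zero, zero_add] at this
    exact this
  obtain ⟨⟨r, m⟩, hr⟩ := IsLocalization.surj (M := Submonoid.powers w) (Φ b)
  obtain ⟨e, he⟩ := m.2
  have he' : w ^ e = (m : MvPolynomial (Fin n) ℂ) := he
  have key : ι (A ^ k * w ^ e) = ι (r * Q) := by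
    have h1 : ι (A ^ k * w ^ e) = ι A ^ k * ι ((m : MvPolynomial (Fin n) ℂ)) := by
      rw [map_mul, he', map_pow]
    rw [h1, ← him, mul_comm (Φ b) (ι Q), mul_assoc, hr, map_mul, mul_comm]
  have hinj : Function.Injective ι :=
    IsLocalization.injective L (powers_le_nonZeroDivisors_of_noZeroDivisors hw0)
  have keyS : A ^ k * w ^ e = r * Q := hinj key
  have hdvd : Q ∣ A ^ k * w ^ e := ⟨r, by rw [keyS]; ring⟩
  rcases hQprime.2.2 _ _ hdvd with h | h
  · exact Ideal.mem_span_singleton.mpr (hQprime.dvd_of_dvd_pow h)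
  · exact absurd (hQprime.dvd_of_dvd_pow h) hQnw
end
end
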